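/- (One-dimensional Laguerre identity.) Let n = 1 and a > 0, with Bergman kernel 𝒫(Z,Z′) = (a/(2π)) exp(−(a/4)(|z|² + |z′|² − 2 z conj(z′))) on ℝ² × ℝ². For all integers l ≥ l′ ≥ 0 and all Z, Z′, applying b l times in the first variable Z and b̄ l′ times in the second variable Z′ to 𝒫 gives b^l_Z b̄^{l′}_{Z′} 𝒫(Z,Z′) = 2^{l′} a^{l} l′! (z̄ − conj(z′))^{l−l′} L^{(l−l′)}_{l′}( a|z−z′|²/2 ) 𝒫(Z,Z′). In particular, on the diagonal Z = Z′: b^l_Z b̄^{l′}_{Z′} 𝒫(Z,Z) = 2^{l} a^{l} l! 𝒫(0,0) if l = l′, and = 0 if l ≠ l′. -/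

import Mathlib

open Complex

noncomputable section

/-- Wirtinger derivative `∂/∂z` on `ℂ ≅ ℝ²`. -/
def wdz1 (u : ℂ → ℂ) (z : ℂ) : ℂ :=
  (1 / 2 : ℂ) * (fderiv ℝ u z 1 - Complex.I * fderiv ℝ u z Complex.I)

/-- Wirtinger derivative `∂/∂z̄` on `ℂ ≅ ℝ²`. -/
def wdzbar1 (u : ℂ → ℂ) (z : ℂ) : ℂ :=
  (1 / 2 : ℂ) * (fderiv ℝ u z 1 + Complex.I * fderiv ℝ u z Complex.I)

/-- The operator `b = -2 ∂/∂z + (1/2) a z̄`. -/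
def opb1 (a : ℝ) (u : ℂ → ℂ) (z : ℂ) : ℂ :=
  -2 * wdz1 u z + (1 / 2 : ℂ) * (a : ℂ) * (starRingEnd ℂ) z * u z

/-- The operator `b̄ = -2 ∂/∂z̄ + (1/2) a z`. -/
def opbbar1 (a : ℝ) (u : ℂ → ℂ) (z : ℂ) : ℂ :=
  -2 * wdzbar1 u z + (1 / 2 : ℂ) * (a : ℂ) * z * u z

/-- The one-dimensional Bergman kernel. -/
def berg1 (a : ℝ) (z z' : ℂ) : ℂ :=
  ((a / (2 * Real.pi) : ℝ) : ℂ) *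
    Complex.exp (-((a : ℂ) / 4) * (((‖z‖ ^ 2 : ℝ) : ℂ) + ((‖z'‖ ^ 2 : ℝ) : ℂ)
      - 2 * z * (starRingEnd ℂ) z'))

lemma fderiv_real_of_complex {h : ℂ → ℂ} {y : ℂ} (hh : DifferentiableAt ℂ h y) (c : ℂ) :
    fderiv ℝ h y c = deriv h y * c := by
  rw [(hh.hasFDerivAt.restrictScalars ℝ).fderiv]
  have : fderiv ℂ h y c = c • fderiv ℂ h y 1 := by
    rw [← ContinuousLinearMap.map_smul, smul_eq_mul, mul_one]
  simp only [ContinuousLinearMap.coe_restrictScalars', this, smul_eq_mul, fderiv_apply_one_eq_deriv]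
  ring

lemma wdz1_holo {h : ℂ → ℂ} {y : ℂ} (hh : DifferentiableAt ℂ h y) :
    wdz1 h y = deriv h y := by
  simp only [wdz1, fderiv_real_of_complex hh]
  have := Complex.I_mul_I
  field_simp
  ring_nf
  rw [Complex.I_sq]
  ring

lemma wdzbar1_holo {h : ℂ → ℂ} {y : ℂ} (hh : DifferentiableAt ℂ h y) :
    wdzbar1 h y = 0 := by
  simp only [wdzbar1, fderiv_real_of_complex hh]
  ring_nf
  rw [Complex.I_sq]
  ring

lemma fderiv_conj_comp {h : ℂ → ℂ} {y : ℂ} (hh : DifferentiableAt ℂ h y) (c : ℂ) :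
    fderiv ℝ (fun w => (starRingEnd ℂ) (h w)) y c = (starRingEnd ℂ) (deriv h y * c) := by
  have h1 : (fun w => (starRingEnd ℂ) (h w)) = (Complex.conjCLE : ℂ → ℂ) ∘ h := rfl
  rw [h1, fderiv_comp y (Complex.conjCLE.differentiable.differentiableAt) (hh.restrictScalars ℝ)]
  simp only [ContinuousLinearEquiv.fderiv, ContinuousLinearMap.coe_comp', Function.comp_apply]
  rw [fderiv_real_of_complex hh c]
  rfl

lemma wdz1_antiholo {h : ℂ → ℂ} {y : ℂ} (hh : DifferentiableAt ℂ h y) :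
    wdz1 (fun w => (starRingEnd ℂ) (h w)) y = 0 := by
  simp only [wdz1, fderiv_conj_comp hh, map_mul, Complex.conj_I, map_one]
  linear_combination (1/2 : ℂ) * (starRingEnd ℂ) (deriv h y) * Complex.I_sq

lemma wdzbar1_antiholo {h : ℂ → ℂ} {y : ℂ} (hh : DifferentiableAt ℂ h y) :
    wdzbar1 (fun w => (starRingEnd ℂ) (h w)) y = (starRingEnd ℂ) (deriv h y) := by
  simp only [wdzbar1, fderiv_conj_comp hh, map_mul, Complex.conj_I, map_one]
  linear_combination (-1/2 : ℂ) * (starRingEnd ℂ) (deriv h y) * Complex.I_sq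

lemma wdz1_mul {f g : ℂ → ℂ} {y : ℂ} (hf : DifferentiableAt ℝ f y) (hg : DifferentiableAt ℝ g y) :
    wdz1 (fun w => f w * g w) y = wdz1 f y * g y + f y * wdz1 g y := by
  simp only [wdz1, fderiv_fun_mul hf hg, ContinuousLinearMap.add_apply, ContinuousLinearMap.smul_apply,
    smul_eq_mul]
  ring

lemma wdzbar1_mul {f g : ℂ → ℂ} {y : ℂ} (hf : DifferentiableAt ℝ f y) (hg : DifferentiableAt ℝ g y) :
    wdzbar1 (fun w => f w * g w) y = wdzbar1 f y * g y + f y * wdzbar1 g y := by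
  simp only [wdzbar1, fderiv_fun_mul hf hg, ContinuousLinearMap.add_apply, ContinuousLinearMap.smul_apply,
    smul_eq_mul]
  ring

lemma wdz1_comp {h φ : ℂ → ℂ} {y : ℂ} (hh : DifferentiableAt ℂ h (φ y))
    (hφ : DifferentiableAt ℝ φ y) :
    wdz1 (fun w => h (φ w)) y = deriv h (φ y) * wdz1 φ y := by
  have h1 : (fun w => h (φ w)) = h ∘ φ := rfl
  rw [h1, wdz1, wdz1, fderiv_comp y (hh.restrictScalars ℝ) hφ]
  simp only [ContinuousLinearMap.coe_comp', Function.comp_apply, fderiv_real_of_complex hh]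
  ring

lemma wdzbar1_comp {h φ : ℂ → ℂ} {y : ℂ} (hh : DifferentiableAt ℂ h (φ y))
    (hφ : DifferentiableAt ℝ φ y) :
    wdzbar1 (fun w => h (φ w)) y = deriv h (φ y) * wdzbar1 φ y := by
  have h1 : (fun w => h (φ w)) = h ∘ φ := rfl
  rw [h1, wdzbar1, wdzbar1, fderiv_comp y (hh.restrictScalars ℝ) hφ]
  simp only [ContinuousLinearMap.coe_comp', Function.comp_apply, fderiv_real_of_complex hh]
  ring

lemma wdz1_add {f g : ℂ → ℂ} {y : ℂ} (hf : DifferentiableAt ℝ f y) (hg : DifferentiableAt ℝ g y) :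
    wdz1 (fun w => f w + g w) y = wdz1 f y + wdz1 g y := by
  simp only [wdz1, fderiv_fun_add hf hg, ContinuousLinearMap.add_apply]
  ring

lemma wdzbar1_add {f g : ℂ → ℂ} {y : ℂ} (hf : DifferentiableAt ℝ f y) (hg : DifferentiableAt ℝ g y) :
    wdzbar1 (fun w => f w + g w) y = wdzbar1 f y + wdzbar1 g y := by
  simp only [wdzbar1, fderiv_fun_add hf hg, ContinuousLinearMap.add_apply]
  ring

lemma wdz1_const (c y : ℂ) : wdz1 (fun _ => c) y = 0 := by
  rw [wdz1_holo (differentiableAt_const c), deriv_const]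

lemma wdzbar1_const (c y : ℂ) : wdzbar1 (fun _ => c) y = 0 := by
  rw [wdzbar1_holo (differentiableAt_const c)]

lemma wdz1_id (y : ℂ) : wdz1 (fun w => w) y = 1 := by
  rw [wdz1_holo differentiableAt_fun_id, deriv_id'']

lemma wdzbar1_id (y : ℂ) : wdzbar1 (fun w => w) y = 0 := by
  rw [wdzbar1_holo differentiableAt_fun_id]

lemma wdz1_conj (y : ℂ) : wdz1 (fun w => (starRingEnd ℂ) w) y = 0 :=
  wdz1_antiholo differentiableAt_fun_id

lemma wdzbar1_conj (y : ℂ) : wdzbar1 (fun w => (starRingEnd ℂ) w) y = 1 := by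
  rw [wdzbar1_antiholo differentiableAt_fun_id, deriv_id'']
  exact map_one _

-- differentiability helpers
lemma diffC_holo_pow (z' : ℂ) (r : ℕ) : Differentiable ℂ (fun w : ℂ => (w - z') ^ r) :=
  (differentiable_id.sub_const z').pow r

lemma diffR_holo_pow (z' : ℂ) (r : ℕ) : Differentiable ℝ (fun w : ℂ => (w - z') ^ r) :=
  Differentiable.restrictScalars ℝ (diffC_holo_pow z' r)

lemma diffR_conj_pow (z' : ℂ) (m : ℕ) :
    Differentiable ℝ (fun w : ℂ => (starRingEnd ℂ) ((w - z') ^ m)) :=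
  Complex.conjCLE.differentiable.comp (diffR_holo_pow z' m)

def phi1 (z' w : ℂ) : ℂ := (w - z') * (starRingEnd ℂ) (w - z')

lemma diffR_phi1 (z' : ℂ) : Differentiable ℝ (phi1 z') := by
  have h1 := diffR_holo_pow z' 1
  have h2 := diffR_conj_pow z' 1
  simp only [pow_one] at h1 h2
  exact h1.mul h2

lemma diffR_peval (z' : ℂ) (p : Polynomial ℂ) :
    Differentiable ℝ (fun w => p.eval (phi1 z' w)) := fun w =>
  DifferentiableAt.comp w ((p.differentiableAt).restrictScalars ℝ) (diffR_phi1 z' w)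

lemma abssq_cast (w : ℂ) : ((‖w‖ ^ 2 : ℝ) : ℂ) = w * (starRingEnd ℂ) w := by
  rw [Complex.sq_norm]
  exact (Complex.mul_conj w).symm

/-- exponent of berg1 as a function of the first variable -/
def gexp (a : ℝ) (z' w : ℂ) : ℂ :=
  -((a : ℂ) / 4) * (w * (starRingEnd ℂ) w) + ((a : ℂ) / 2 * (starRingEnd ℂ) z') * w
    + (-((a : ℂ) / 4) * (z' * (starRingEnd ℂ) z'))

lemma berg1_eq_exp (a : ℝ) (z' w : ℂ) :
    berg1 a w z' = ((a / (2 * Real.pi) : ℝ) : ℂ) * Complex.exp (gexp a z' w) := by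
  unfold berg1 gexp
  rw [abssq_cast, abssq_cast]
  congr 1
  ring

lemma diffR_gexp (a : ℝ) (z' : ℂ) : Differentiable ℝ (gexp a z') := by
  unfold gexp
  apply Differentiable.add
  apply Differentiable.add
  · have h1 : Differentiable ℝ (fun w : ℂ => (starRingEnd ℂ) w) := by
      have := diffR_conj_pow 0 1
      simp only [sub_zero, pow_one] at this
      exact this
    exact (differentiable_const _).mul
      ((Differentiable.restrictScalars (𝕜' := ℂ) ℝ differentiable_id).mul h1)
  · exact (differentiable_const _).mul (Differentiable.restrictScalars (𝕜' := ℂ) ℝ differentiable_id)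
  · exact differentiable_const _

lemma diffR_berg1 (a : ℝ) (z' : ℂ) : Differentiable ℝ (fun w => berg1 a w z') := by
  have : (fun w => berg1 a w z')
      = fun w => ((a / (2 * Real.pi) : ℝ) : ℂ) * Complex.exp (gexp a z' w) := by
    funext w; exact berg1_eq_exp a z' w
  rw [this]
  refine (differentiable_const _).mul (fun w => ?_)
  have hcomp : (fun w => Complex.exp (gexp a z' w)) = Complex.exp ∘ gexp a z' := rfl
  rw [hcomp]
  exact DifferentiableAt.comp w
    (DifferentiableAt.restrictScalars ℝ (𝕜' := ℂ) Complex.differentiable_exp.differentiableAt)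
    (diffR_gexp a z' w)

lemma wdz1_const_mul (c : ℂ) {f : ℂ → ℂ} {y : ℂ} (hf : DifferentiableAt ℝ f y) :
    wdz1 (fun w => c * f w) y = c * wdz1 f y := by
  rw [wdz1_mul (differentiableAt_const c) hf, wdz1_const]
  ring

lemma wdzbar1_const_mul (c : ℂ) {f : ℂ → ℂ} {y : ℂ} (hf : DifferentiableAt ℝ f y) :
    wdzbar1 (fun w => c * f w) y = c * wdzbar1 f y := by
  rw [wdzbar1_mul (differentiableAt_const c) hf, wdzbar1_const]
  ring

lemma diffR_id' {y : ℂ} : DifferentiableAt ℝ (fun w : ℂ => w) y :=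
  (Differentiable.restrictScalars (𝕜' := ℂ) ℝ differentiable_id) y

lemma diffR_conj : Differentiable ℝ (fun w : ℂ => (starRingEnd ℂ) w) := by
  have := diffR_conj_pow 0 1
  simp only [sub_zero, pow_one] at this
  exact this

lemma wdz1_wconjw (y : ℂ) : wdz1 (fun w : ℂ => w * (starRingEnd ℂ) w) y = (starRingEnd ℂ) y := by
  rw [wdz1_mul diffR_id' (diffR_conj y), wdz1_id, wdz1_conj]
  ring

lemma wdzbar1_wconjw (y : ℂ) : wdzbar1 (fun w : ℂ => w * (starRingEnd ℂ) w) y = y := by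
  rw [wdzbar1_mul diffR_id' (diffR_conj y), wdzbar1_id, wdzbar1_conj]
  ring

lemma wdz1_gexp (a : ℝ) (z' y : ℂ) :
    wdz1 (gexp a z') y = -((a : ℂ) / 4) * (starRingEnd ℂ) y + (a : ℂ) / 2 * (starRingEnd ℂ) z' := by
  have h1 : DifferentiableAt ℝ (fun w : ℂ => -((a : ℂ) / 4) * (w * (starRingEnd ℂ) w)) y :=
    (differentiableAt_const _).mul (diffR_id'.mul (diffR_conj y))
  have h2 : DifferentiableAt ℝ (fun w : ℂ => ((a : ℂ) / 2 * (starRingEnd ℂ) z') * w) y :=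
    (differentiableAt_const _).mul diffR_id'
  have hg : gexp a z' = fun w => (-((a : ℂ) / 4) * (w * (starRingEnd ℂ) w)
      + ((a : ℂ) / 2 * (starRingEnd ℂ) z') * w)
      + (-((a : ℂ) / 4) * (z' * (starRingEnd ℂ) z')) := rfl
  rw [hg, wdz1_add (h1.fun_add h2) (differentiableAt_const _), wdz1_add h1 h2, wdz1_const,
    wdz1_const_mul _ (diffR_id'.fun_mul (diffR_conj y)), wdz1_const_mul _ diffR_id',
    wdz1_wconjw, wdz1_id]
  ring

lemma diffR_expgexp (a : ℝ) (z' : ℂ) : Differentiable ℝ (fun w => Complex.exp (gexp a z' w)) := by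
  have hcomp : (fun w => Complex.exp (gexp a z' w)) = Complex.exp ∘ gexp a z' := rfl
  rw [hcomp]
  exact fun w => DifferentiableAt.comp w
    (DifferentiableAt.restrictScalars ℝ (𝕜' := ℂ) Complex.differentiable_exp.differentiableAt)
    (diffR_gexp a z' w)

lemma wdz1_berg1 (a : ℝ) (z' y : ℂ) :
    wdz1 (fun w => berg1 a w z') y
      = (-((a : ℂ) / 4) * (starRingEnd ℂ) y + (a : ℂ) / 2 * (starRingEnd ℂ) z') * berg1 a y z' := by
  have hb : (fun w => berg1 a w z')
      = fun w => ((a / (2 * Real.pi) : ℝ) : ℂ) * Complex.exp (gexp a z' w) := by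
    funext w; exact berg1_eq_exp a z' w
  rw [hb, wdz1_const_mul _ (diffR_expgexp a z' y)]
  have : wdz1 (fun w => Complex.exp (gexp a z' w)) y
      = Complex.exp (gexp a z' y) * wdz1 (gexp a z') y := by
    rw [wdz1_comp Complex.differentiable_exp.differentiableAt (diffR_gexp a z' y),
      Complex.deriv_exp]
  rw [this, wdz1_gexp, berg1_eq_exp]
  ring

/-- exponent of berg1 as a function of the second variable -/
def gexp2 (a : ℝ) (z w : ℂ) : ℂ :=
  -((a : ℂ) / 4) * (w * (starRingEnd ℂ) w) + ((a : ℂ) / 2 * z) * (starRingEnd ℂ) w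
    + (-((a : ℂ) / 4) * (z * (starRingEnd ℂ) z))

lemma berg1_eq_exp2 (a : ℝ) (z w : ℂ) :
    berg1 a z w = ((a / (2 * Real.pi) : ℝ) : ℂ) * Complex.exp (gexp2 a z w) := by
  unfold berg1 gexp2
  rw [abssq_cast, abssq_cast]
  congr 1
  ring

lemma diffR_gexp2 (a : ℝ) (z : ℂ) : Differentiable ℝ (gexp2 a z) := by
  unfold gexp2
  apply Differentiable.add
  apply Differentiable.add
  · exact (differentiable_const _).mul
      ((Differentiable.restrictScalars (𝕜' := ℂ) ℝ differentiable_id).mul diffR_conj)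
  · exact (differentiable_const _).mul diffR_conj
  · exact differentiable_const _

lemma diffR_expgexp2 (a : ℝ) (z : ℂ) : Differentiable ℝ (fun w => Complex.exp (gexp2 a z w)) := by
  have hcomp : (fun w => Complex.exp (gexp2 a z w)) = Complex.exp ∘ gexp2 a z := rfl
  rw [hcomp]
  exact fun w => DifferentiableAt.comp w
    (DifferentiableAt.restrictScalars ℝ (𝕜' := ℂ) Complex.differentiable_exp.differentiableAt)
    (diffR_gexp2 a z w)

lemma diffR_berg2 (a : ℝ) (z : ℂ) : Differentiable ℝ (fun w => berg1 a z w) := by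
  have hb : (fun w => berg1 a z w)
      = fun w => ((a / (2 * Real.pi) : ℝ) : ℂ) * Complex.exp (gexp2 a z w) := by
    funext w; exact berg1_eq_exp2 a z w
  rw [hb]
  exact (differentiable_const _).mul (diffR_expgexp2 a z)

lemma wdzbar1_gexp2 (a : ℝ) (z y : ℂ) :
    wdzbar1 (gexp2 a z) y = -((a : ℂ) / 4) * y + (a : ℂ) / 2 * z := by
  have h1 : DifferentiableAt ℝ (fun w : ℂ => -((a : ℂ) / 4) * (w * (starRingEnd ℂ) w)) y :=
    (differentiableAt_const _).mul (diffR_id'.mul (diffR_conj y))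
  have h2 : DifferentiableAt ℝ (fun w : ℂ => ((a : ℂ) / 2 * z) * (starRingEnd ℂ) w) y :=
    (differentiableAt_const _).mul (diffR_conj y)
  have hg : gexp2 a z = fun w => (-((a : ℂ) / 4) * (w * (starRingEnd ℂ) w)
      + ((a : ℂ) / 2 * z) * (starRingEnd ℂ) w)
      + (-((a : ℂ) / 4) * (z * (starRingEnd ℂ) z)) := rfl
  rw [hg, wdzbar1_add (h1.fun_add h2) (differentiableAt_const _), wdzbar1_add h1 h2, wdzbar1_const,
    wdzbar1_const_mul _ (diffR_id'.fun_mul (diffR_conj y)), wdzbar1_const_mul _ (diffR_conj y),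
    wdzbar1_wconjw, wdzbar1_conj]
  ring

lemma wdzbar1_berg2 (a : ℝ) (z y : ℂ) :
    wdzbar1 (fun w => berg1 a z w) y = (-((a : ℂ) / 4) * y + (a : ℂ) / 2 * z) * berg1 a z y := by
  have hb : (fun w => berg1 a z w)
      = fun w => ((a / (2 * Real.pi) : ℝ) : ℂ) * Complex.exp (gexp2 a z w) := by
    funext w; exact berg1_eq_exp2 a z w
  rw [hb, wdzbar1_const_mul _ (diffR_expgexp2 a z y)]
  have : wdzbar1 (fun w => Complex.exp (gexp2 a z w)) y
      = Complex.exp (gexp2 a z y) * wdzbar1 (gexp2 a z) y := by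
    rw [wdzbar1_comp Complex.differentiable_exp.differentiableAt (diffR_gexp2 a z y),
      Complex.deriv_exp]
  rw [this, wdzbar1_gexp2, berg1_eq_exp2]
  ring

lemma opbbar1_step (a : ℝ) (z c : ℂ) (j : ℕ) :
    opbbar1 a (fun w' => c * (w' - z) ^ j * berg1 a z w')
      = fun w' => ((a : ℂ) * c) * (w' - z) ^ (j + 1) * berg1 a z w' := by
  funext y
  unfold opbbar1
  have hpol : DifferentiableAt ℝ (fun w' : ℂ => c * (w' - z) ^ j) y :=
    (differentiableAt_const c).mul (diffR_holo_pow z j y)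
  have h0 : wdzbar1 (fun w' : ℂ => c * (w' - z) ^ j) y = 0 :=
    wdzbar1_holo ((differentiableAt_const c).mul
      ((differentiable_id.sub_const z).pow j).differentiableAt)
  have hmul : wdzbar1 (fun w' => c * (w' - z) ^ j * berg1 a z w') y
      = wdzbar1 (fun w' : ℂ => c * (w' - z) ^ j) y * berg1 a z y
        + (c * (y - z) ^ j) * wdzbar1 (fun w' => berg1 a z w') y :=
    wdzbar1_mul hpol (diffR_berg2 a z y)
  rw [hmul, h0, wdzbar1_berg2]
  ring

lemma iter_opbbar (a : ℝ) (z : ℂ) (k : ℕ) :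
    (opbbar1 a)^[k] (fun w' => berg1 a z w')
      = fun w' => (a : ℂ) ^ k * (w' - z) ^ k * berg1 a z w' := by
  induction k with
  | zero => funext y; simp
  | succ n ih =>
    rw [Function.iterate_succ_apply', ih, opbbar1_step a z ((a : ℂ) ^ n) n]
    funext y
    ring

open Polynomial in
/-- The building-block functions for the induction in the first variable. -/
def FF (a : ℝ) (z' : ℂ) (r m : ℕ) (p : Polynomial ℂ) (w : ℂ) : ℂ :=
  (w - z') ^ r * (starRingEnd ℂ) ((w - z') ^ m) * Polynomial.eval (phi1 z' w) p * berg1 a w z'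

lemma deriv_sub_pow (z' w : ℂ) (r : ℕ) :
    deriv (fun w => (w - z') ^ r) w = (r : ℂ) * (w - z') ^ (r - 1) := by
  have h : HasDerivAt (fun w : ℂ => (w - z') ^ r) ((r : ℂ) * (w - z') ^ (r - 1) * 1) w :=
    ((hasDerivAt_id w).sub_const z').pow r
  simpa using h.deriv

lemma wdz1_sub_pow (z' w : ℂ) (r : ℕ) :
    wdz1 (fun w => (w - z') ^ r) w = (r : ℂ) * (w - z') ^ (r - 1) := by
  have hd : DifferentiableAt ℂ (fun w : ℂ => (w - z') ^ r) w := (diffC_holo_pow z' r).differentiableAt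
  rw [wdz1_holo hd, deriv_sub_pow]

lemma wdz1_conj_pow (z' w : ℂ) (m : ℕ) :
    wdz1 (fun w => (starRingEnd ℂ) ((w - z') ^ m)) w = 0 :=
  wdz1_antiholo ((diffC_holo_pow z' m).differentiableAt)

lemma wdz1_phi1 (z' w : ℂ) : wdz1 (phi1 z') w = (starRingEnd ℂ) (w - z') := by
  have hφ : phi1 z' = fun w => (w - z') * (starRingEnd ℂ) (w - z') := rfl
  have hd1 : DifferentiableAt ℝ (fun w : ℂ => w - z') w := by
    have := diffR_holo_pow z' 1; simpa using this w
  have hd2 : DifferentiableAt ℝ (fun w : ℂ => (starRingEnd ℂ) (w - z')) w := by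
    have := diffR_conj_pow z' 1; simpa using this w
  rw [hφ, wdz1_mul hd1 hd2]
  have hdc : DifferentiableAt ℂ (fun w : ℂ => w - z') w := by
    have := (diffC_holo_pow z' 1).differentiableAt (x := w)
    simpa using this
  have h1 : wdz1 (fun w : ℂ => w - z') w = 1 := by
    have h : HasDerivAt (fun w : ℂ => w - z') 1 w := (hasDerivAt_id w).sub_const z'
    rw [wdz1_holo hdc, h.deriv]
  have h2 : wdz1 (fun w : ℂ => (starRingEnd ℂ) (w - z')) w = 0 :=
    wdz1_antiholo hdc
  rw [h1, h2]
  ring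

open Polynomial in
lemma wdz1_peval (z' w : ℂ) (p : Polynomial ℂ) :
    wdz1 (fun w => Polynomial.eval (phi1 z' w) p) w
      = Polynomial.eval (phi1 z' w) (derivative p) * (starRingEnd ℂ) (w - z') := by
  rw [wdz1_comp (p.differentiableAt) (diffR_phi1 z' w), Polynomial.deriv, wdz1_phi1]

open Polynomial in
lemma opb1_FF (a : ℝ) (z' : ℂ) (r m : ℕ) (p : Polynomial ℂ) (w : ℂ) :
    opb1 a (FF a z' r m p) w
      = (-2 * (r : ℂ)) * ((w - z') ^ (r - 1) * (starRingEnd ℂ) ((w - z') ^ m)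
          * Polynomial.eval (phi1 z' w) p * berg1 a w z')
        + (w - z') ^ r * (starRingEnd ℂ) ((w - z') ^ (m + 1))
          * Polynomial.eval (phi1 z' w) (C ((a : ℂ)) * p - C 2 * derivative p) * berg1 a w z' := by
  have dA : DifferentiableAt ℝ (fun w : ℂ => (w - z') ^ r) w := diffR_holo_pow z' r w
  have dB : DifferentiableAt ℝ (fun w : ℂ => (starRingEnd ℂ) ((w - z') ^ m)) w :=
    diffR_conj_pow z' m w
  have dC : DifferentiableAt ℝ (fun w => Polynomial.eval (phi1 z' w) p) w := diffR_peval z' p w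
  have dD : DifferentiableAt ℝ (fun w => berg1 a w z') w := diffR_berg1 a z' w
  have hFF : FF a z' r m p = fun w =>
      ((w - z') ^ r * (starRingEnd ℂ) ((w - z') ^ m) * Polynomial.eval (phi1 z' w) p)
        * berg1 a w z' := rfl
  unfold opb1
  rw [hFF, wdz1_mul ((dA.fun_mul dB).fun_mul dC) dD, wdz1_mul (dA.fun_mul dB) dC, wdz1_mul dA dB,
    wdz1_sub_pow, wdz1_conj_pow, wdz1_peval, wdz1_berg1]
  simp only [Polynomial.eval_sub, Polynomial.eval_mul, Polynomial.eval_C, map_pow, map_sub]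
  ring

/-- Generalized Laguerre polynomial `L^{(m)}_k`. -/
def laguerre (m k : ℕ) (x : ℂ) : ℂ :=
  ∑ j ∈ Finset.range (k + 1), (Nat.choose (k + m) (k - j) : ℂ) * (-x) ^ j / (Nat.factorial j : ℂ)

open Polynomial in
/-- scaled Laguerre polynomial as a `Polynomial` -/
def PP (a : ℝ) (m k : ℕ) : Polynomial ℂ :=
  ∑ j ∈ Finset.range (k + 1),
    Polynomial.C ((Nat.choose (k + m) (k - j) : ℂ) * (-(a : ℂ) / 2) ^ j / (Nat.factorial j : ℂ))
      * Polynomial.X ^ j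

open Polynomial in
lemma PP_coeff (a : ℝ) (m k n : ℕ) :
    (PP a m k).coeff n = if n ≤ k then
      (Nat.choose (k + m) (k - n) : ℂ) * (-(a : ℂ) / 2) ^ n / (Nat.factorial n : ℂ) else 0 := by
  unfold PP
  rw [Polynomial.finset_sum_coeff]
  simp only [Polynomial.coeff_C_mul, Polynomial.coeff_X_pow, mul_ite, mul_one, mul_zero]
  rw [Finset.sum_ite_eq]
  simp [Nat.lt_succ_iff]

open Polynomial in
lemma PP_eval (a : ℝ) (m k : ℕ) (x : ℂ) :
    Polynomial.eval x (PP a m k) = laguerre m k ((a : ℂ) * x / 2) := by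
  unfold PP laguerre
  rw [Polynomial.eval_finset_sum]
  refine Finset.sum_congr rfl fun j hj => ?_
  simp only [Polynomial.eval_mul, Polynomial.eval_C, Polynomial.eval_pow, Polynomial.eval_X]
  have : (-((a : ℂ) * x / 2)) ^ j = (-(a : ℂ) / 2) ^ j * x ^ j := by
    rw [← mul_pow]; ring_nf
  rw [this]
  ring

open Polynomial in
lemma PP_step2 (a : ℝ) (m k : ℕ) :
    Polynomial.C (a : ℂ) * PP a m k - Polynomial.C 2 * Polynomial.derivative (PP a m k)
      = Polynomial.C (a : ℂ) * PP a (m + 1) k := by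
  ext n
  simp only [Polynomial.coeff_sub, Polynomial.coeff_C_mul, Polynomial.coeff_derivative, PP_coeff]
  have hfac : ((Nat.factorial n : ℂ)) ≠ 0 := Nat.cast_ne_zero.mpr (Nat.factorial_ne_zero n)
  have hn0 : ((n : ℂ) + 1) ≠ 0 := Nat.cast_add_one_ne_zero n
  have hfs : (Nat.factorial (n + 1) : ℂ) = ((n : ℂ) + 1) * (Nat.factorial n : ℂ) := by
    rw [Nat.factorial_succ]; push_cast; ring
  by_cases hn : n ≤ k
  · by_cases hn1 : n + 1 ≤ k
    · simp only [hn, hn1, if_true]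
      rw [hfs]
      have hpasnat : Nat.choose (k + (m + 1)) (k - n)
          = Nat.choose (k + m) (k - n) + Nat.choose (k + m) (k - (n + 1)) := by
        rw [show k + (m + 1) = (k + m) + 1 by omega, show k - n = (k - (n + 1)) + 1 by omega,
          Nat.choose_succ_succ]
        simp only [Nat.succ_eq_add_one]
        omega
      have hpas : (Nat.choose (k + (m + 1)) (k - n) : ℂ)
          = (Nat.choose (k + m) (k - n) : ℂ) + (Nat.choose (k + m) (k - (n + 1)) : ℂ) := by
        exact_mod_cast congrArg (Nat.cast : ℕ → ℂ) hpasnat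
      rw [hpas]
      field_simp
      ring
    · have hnk : n = k := by omega
      subst hnk
      simp [hn, hn1, Nat.sub_self]
  · have hn1 : ¬ (n + 1 ≤ k) := by omega
    simp [hn, hn1]

open Polynomial in
lemma PP_step1 (a : ℝ) (r s : ℕ) :
    Polynomial.C (-2 * ((r : ℂ) + 1)) * PP a (r + 1) s
      + Polynomial.X * (Polynomial.C (a : ℂ) * PP a (r + 1) s
          - Polynomial.C 2 * Polynomial.derivative (PP a (r + 1) s))
      = Polynomial.C (-2 * ((s : ℂ) + 1)) * PP a r (s + 1) := by
  ext n
  rcases n with _ | n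
  · simp only [Polynomial.coeff_add, Polynomial.coeff_C_mul, Polynomial.mul_coeff_zero,
      Polynomial.coeff_X_zero, zero_mul, add_zero, PP_coeff]
    simp only [Nat.zero_le, if_true, Nat.sub_zero, pow_zero, Nat.factorial_zero, Nat.cast_one]
    have hnat : Nat.choose (s + 1 + r) (s + 1) * (s + 1) = Nat.choose (s + 1 + r) s * (r + 1) := by
      rw [Nat.choose_succ_right_eq]
      congr 1
      omega
    rw [show s + (r + 1) = s + 1 + r by omega]
    have hc : (Nat.choose (s + 1 + r) (s + 1) : ℂ) * ((s : ℂ) + 1)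
        = (Nat.choose (s + 1 + r) s : ℂ) * ((r : ℂ) + 1) := by
      exact_mod_cast congrArg (Nat.cast : ℕ → ℂ) hnat
    field_simp
    rw [Polynomial.coeff_C_zero, Polynomial.coeff_C_zero]
    linear_combination (2 : ℂ) * hc
  · simp only [Polynomial.coeff_add, Polynomial.coeff_C_mul, Polynomial.coeff_X_mul,
      Polynomial.coeff_sub, Polynomial.coeff_derivative, PP_coeff]
    have hfacn : ((Nat.factorial n : ℂ)) ≠ 0 := Nat.cast_ne_zero.mpr (Nat.factorial_ne_zero n)
    have hn0 : ((n : ℂ) + 1) ≠ 0 := Nat.cast_add_one_ne_zero n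
    have hfs : (Nat.factorial (n + 1) : ℂ) = ((n : ℂ) + 1) * (Nat.factorial n : ℂ) := by
      rw [Nat.factorial_succ]; push_cast; ring
    by_cases h1 : n + 1 ≤ s
    · have h0 : n ≤ s := by omega
      have h2 : n + 1 ≤ s + 1 := by omega
      simp only [h1, h0, h2, if_true]
      rw [show s + (r + 1) = s + r + 1 by omega, show s + 1 + r = s + r + 1 by omega,
        show s + 1 - (n + 1) = (s - (n + 1)) + 1 by omega,
        show s - n = (s - (n + 1)) + 1 by omega]
      have key : Nat.choose (s + r + 1) ((s - (n + 1)) + 1) * ((s - (n + 1)) + 1)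
          = Nat.choose (s + r + 1) (s - (n + 1)) * (r + 1 + (n + 1)) := by
        rw [Nat.choose_succ_right_eq]
        congr 1
        omega
      have keyc : (Nat.choose (s + r + 1) ((s - (n + 1)) + 1) : ℂ) * (((s - (n + 1)) : ℕ) + 1 : ℂ)
          = (Nat.choose (s + r + 1) (s - (n + 1)) : ℂ) * ((r : ℂ) + 1 + ((n : ℂ) + 1)) := by
        exact_mod_cast congrArg (Nat.cast : ℕ → ℂ) key
      have hdc : (((s - (n + 1)) : ℕ) : ℂ) = (s : ℂ) - (n : ℂ) - 1 := by
        push_cast [Nat.cast_sub (by omega : n + 1 ≤ s)]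
        ring
      rw [hdc] at keyc
      have hinv : ((Nat.factorial n : ℂ))⁻¹ = ((n : ℂ) + 1) * ((Nat.factorial (n + 1) : ℂ))⁻¹ := by
        rw [hfs, mul_inv]
        field_simp
      simp only [div_eq_mul_inv]
      rw [hinv]
      linear_combination (2 * (-(a : ℂ) / 2) ^ (n + 1) * ((Nat.factorial (n + 1) : ℂ))⁻¹) * keyc
    · by_cases h0 : n ≤ s
      · have hns : n = s := by omega
        subst hns
        rw [if_neg h1, if_pos h0, if_pos (le_refl (n + 1))]
        simp only [Nat.sub_self, Nat.choose_zero_right, Nat.cast_one]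
        rw [hfs]
        field_simp
        ring
      · have h2 : ¬ (n + 1 ≤ s + 1) := by omega
        simp [h0, h1, h2]

open Polynomial in
lemma opb1_FF_succ (a : ℝ) (z' : ℂ) (t m : ℕ) (p : Polynomial ℂ) :
    opb1 a (FF a z' (t + 1) m p)
      = FF a z' t m (Polynomial.C (-2 * ((t : ℂ) + 1)) * p
          + Polynomial.X * (Polynomial.C (a : ℂ) * p - Polynomial.C 2 * Polynomial.derivative p)) := by
  funext w
  rw [opb1_FF]
  unfold FF phi1
  simp only [Polynomial.eval_add, Polynomial.eval_mul, Polynomial.eval_C, Polynomial.eval_X,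
    Polynomial.eval_sub, Nat.add_sub_cancel, map_pow, Nat.cast_add, Nat.cast_one]
  ring

open Polynomial in
lemma opb1_FF_zero (a : ℝ) (z' : ℂ) (m : ℕ) (p : Polynomial ℂ) :
    opb1 a (FF a z' 0 m p)
      = FF a z' 0 (m + 1) (Polynomial.C (a : ℂ) * p - Polynomial.C 2 * Polynomial.derivative p) := by
  funext w
  rw [opb1_FF]
  unfold FF phi1
  simp only [Polynomial.eval_sub, Polynomial.eval_mul, Polynomial.eval_C, Nat.cast_zero,
    map_pow, pow_zero]
  ring

open Polynomial in
lemma PP_l0 (a : ℝ) (m : ℕ) : PP a m 0 = 1 := by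
  unfold PP
  simp

open Polynomial in
lemma phase1 (a : ℝ) (z' : ℂ) (l' : ℕ) : ∀ s, s ≤ l' →
    (opb1 a)^[s] (FF a z' l' 0 (Polynomial.C ((-1 : ℂ) ^ l' * (a : ℂ) ^ l')))
      = FF a z' (l' - s) 0 (Polynomial.C ((-1 : ℂ) ^ (l' - s) * 2 ^ s * (a : ℂ) ^ l'
          * (Nat.factorial s : ℂ)) * PP a (l' - s) s) := by
  intro s
  induction s with
  | zero =>
    intro _
    simp only [Function.iterate_zero, id_eq, Nat.sub_zero, PP_l0, pow_zero, mul_one,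
      Nat.factorial_zero, Nat.cast_one]
  | succ s ih =>
    intro hs
    have hs' : s ≤ l' := by omega
    rw [Function.iterate_succ_apply', ih hs']
    rw [show l' - s = (l' - (s + 1)) + 1 by omega]
    rw [opb1_FF_succ]
    congr 1
    rw [Polynomial.derivative_C_mul]
    have hfactor : Polynomial.C (-2 * (((l' - (s + 1) : ℕ) : ℂ) + 1))
          * (Polynomial.C ((-1 : ℂ) ^ (l' - (s + 1) + 1) * 2 ^ s * (a : ℂ) ^ l'
              * (Nat.factorial s : ℂ)) * PP a (l' - (s + 1) + 1) s)
        + Polynomial.X * (Polynomial.C (a : ℂ)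
            * (Polynomial.C ((-1 : ℂ) ^ (l' - (s + 1) + 1) * 2 ^ s * (a : ℂ) ^ l'
                * (Nat.factorial s : ℂ)) * PP a (l' - (s + 1) + 1) s)
          - Polynomial.C 2 * (Polynomial.C ((-1 : ℂ) ^ (l' - (s + 1) + 1) * 2 ^ s * (a : ℂ) ^ l'
                * (Nat.factorial s : ℂ)) * Polynomial.derivative (PP a (l' - (s + 1) + 1) s)))
        = Polynomial.C ((-1 : ℂ) ^ (l' - (s + 1) + 1) * 2 ^ s * (a : ℂ) ^ l'
            * (Nat.factorial s : ℂ))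
          * (Polynomial.C (-2 * (((l' - (s + 1) : ℕ) : ℂ) + 1)) * PP a (l' - (s + 1) + 1) s
            + Polynomial.X * (Polynomial.C (a : ℂ) * PP a (l' - (s + 1) + 1) s
              - Polynomial.C 2 * Polynomial.derivative (PP a (l' - (s + 1) + 1) s))) := by
      ring
    rw [hfactor, PP_step1, ← mul_assoc, ← Polynomial.C_mul]
    congr 2
    rw [Nat.factorial_succ]
    push_cast
    ring

open Polynomial in
lemma phase2 (a : ℝ) (z' : ℂ) (l' : ℕ) : ∀ t,
    (opb1 a)^[l' + t] (FF a z' l' 0 (Polynomial.C ((-1 : ℂ) ^ l' * (a : ℂ) ^ l')))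
      = FF a z' 0 t (Polynomial.C ((2 : ℂ) ^ l' * (a : ℂ) ^ (l' + t)
          * (Nat.factorial l' : ℂ)) * PP a t l') := by
  intro t
  induction t with
  | zero =>
    rw [Nat.add_zero, phase1 a z' l' l' (le_refl l'), Nat.sub_self]
    congr 2
    push_cast
    ring
  | succ t ih =>
    rw [show l' + (t + 1) = (l' + t) + 1 by omega, Function.iterate_succ_apply', ih,
      opb1_FF_zero]
    congr 1
    rw [Polynomial.derivative_C_mul]
    have hfactor : Polynomial.C (a : ℂ) * (Polynomial.C ((2 : ℂ) ^ l' * (a : ℂ) ^ (l' + t)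
            * (Nat.factorial l' : ℂ)) * PP a t l')
          - Polynomial.C 2 * (Polynomial.C ((2 : ℂ) ^ l' * (a : ℂ) ^ (l' + t)
            * (Nat.factorial l' : ℂ)) * Polynomial.derivative (PP a t l'))
        = Polynomial.C ((2 : ℂ) ^ l' * (a : ℂ) ^ (l' + t) * (Nat.factorial l' : ℂ))
          * (Polynomial.C (a : ℂ) * PP a t l'
              - Polynomial.C 2 * Polynomial.derivative (PP a t l')) := by
      ring
    rw [hfactor, PP_step2, ← mul_assoc, ← Polynomial.C_mul]
    congr 2
    ring

lemma laguerre_zero_eval (m k : ℕ) : laguerre m k 0 = (Nat.choose (k + m) k : ℂ) := by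
  unfold laguerre
  rw [Finset.sum_eq_single 0]
  · simp
  · intro j hj hj0
    simp [zero_pow hj0]
  · intro hnot
    simp at hnot

lemma berg1_diag (a : ℝ) (z : ℂ) : berg1 a z z = berg1 a 0 0 := by
  unfold berg1
  rw [abssq_cast z, abssq_cast 0]
  congr 2
  ring

theorem one_dimensional_laguerre_identity
    (a : ℝ) (ha : 0 < a) (l l' : ℕ) (h : l' ≤ l) :
    (∀ z z' : ℂ,
      (opb1 a)^[l] (fun w => (opbbar1 a)^[l'] (fun w' => berg1 a w w') z') z
        = (2 : ℂ) ^ l' * (a : ℂ) ^ l * (Nat.factorial l' : ℂ) *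
            ((starRingEnd ℂ) z - (starRingEnd ℂ) z') ^ (l - l') *
            laguerre (l - l') l' ((a : ℂ) * ((‖z - z'‖ ^ 2 : ℝ) : ℂ) / 2) *
            berg1 a z z') ∧
    (l = l' → ∀ z : ℂ,
      (opb1 a)^[l] (fun w => (opbbar1 a)^[l'] (fun w' => berg1 a w w') z) z
        = (2 : ℂ) ^ l * (a : ℂ) ^ l * (Nat.factorial l : ℂ) * berg1 a 0 0) ∧
    (l ≠ l' → ∀ z : ℂ,
      (opb1 a)^[l] (fun w => (opbbar1 a)^[l'] (fun w' => berg1 a w w') z) z = 0) := by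
  have main : ∀ z z' : ℂ,
      (opb1 a)^[l] (fun w => (opbbar1 a)^[l'] (fun w' => berg1 a w w') z') z
        = (2 : ℂ) ^ l' * (a : ℂ) ^ l * (Nat.factorial l' : ℂ) *
            ((starRingEnd ℂ) z - (starRingEnd ℂ) z') ^ (l - l') *
            laguerre (l - l') l' ((a : ℂ) * ((‖z - z'‖ ^ 2 : ℝ) : ℂ) / 2) *
            berg1 a z z' := by
    intro z z'
    have hinner : (fun w => (opbbar1 a)^[l'] (fun w' => berg1 a w w') z')
        = FF a z' l' 0 (Polynomial.C ((-1 : ℂ) ^ l' * (a : ℂ) ^ l')) := by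
      funext w
      rw [iter_opbbar a w l']
      beta_reduce
      unfold FF
      rw [pow_zero, map_one, Polynomial.eval_C]
      rw [show z' - w = -(w - z') by ring, neg_pow]
      ring
    rw [hinner, show l = l' + (l - l') by omega, phase2 a z' l' (l - l')]
    unfold FF
    rw [pow_zero, one_mul, Polynomial.eval_mul, Polynomial.eval_C, PP_eval]
    have hphi : phi1 z' z = ((‖z - z'‖ ^ 2 : ℝ) : ℂ) := by
      unfold phi1
      rw [abssq_cast]
    rw [hphi, show l' + (l - l') = l by omega, map_pow, map_sub]
    ring
  refine ⟨main, ?_, ?_⟩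
  · intro hll z
    rw [main z z]
    subst hll
    rw [Nat.sub_self, pow_zero, sub_self]
    have habs : ((‖(0 : ℂ)‖ ^ 2 : ℝ) : ℂ) = 0 := by simp
    rw [habs, mul_zero, zero_div, laguerre_zero_eval, Nat.add_zero, Nat.choose_self,
      berg1_diag]
    push_cast
    ring
  · intro hll z
    rw [main z z, sub_self, zero_pow (by omega : l - l' ≠ 0)]
    ring
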